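/- Let g be a Lie algebra over a field k of characteristic zero and let X ∈ U(g)⊗U(g) lie in the image of g⊗g, be antisymmetric (τ(X) = −X) and g-invariant ([Δ(x), X] = 0 for all x ∈ g). Then in U(g)⊗U(g)⊗U(g) one has [X₁₃, X₂₃] = 0, where X₁₃ = (id⊗τ)(X⊗1) and X₂₃ = 1⊗X. -/

import Mathlib

open TensorProduct

noncomputable section

variable (k : Type*) [Field k] [CharZero k]
variable (g : Type*) [LieRing g] [LieAlgebra k g]

attribute [local instance] LieRing.ofAssociativeRing

/-- The canonical linear map `g → U(g)`. -/
def ιU : g →ₗ[k] UniversalEnvelopingAlgebra k g :=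
  (UniversalEnvelopingAlgebra.ι k).toLinearMap

/-- The canonical map `g ⊗ g → U(g) ⊗ U(g)`; its range is "the image of `g ⊗ g`". -/
def ιι : g ⊗[k] g →ₗ[k]
    UniversalEnvelopingAlgebra k g ⊗[k] UniversalEnvelopingAlgebra k g :=
  TensorProduct.map (ιU k g) (ιU k g)

/-- The flip automorphism of `U(g) ⊗ U(g)`. -/
def τU : UniversalEnvelopingAlgebra k g ⊗[k] UniversalEnvelopingAlgebra k g ≃ₐ[k]
    UniversalEnvelopingAlgebra k g ⊗[k] UniversalEnvelopingAlgebra k g :=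
  Algebra.TensorProduct.comm k _ _

/-- The associator for `U(g)`. -/
def αU : (UniversalEnvelopingAlgebra k g ⊗[k] UniversalEnvelopingAlgebra k g) ⊗[k]
      UniversalEnvelopingAlgebra k g ≃ₐ[k]
    UniversalEnvelopingAlgebra k g ⊗[k]
      (UniversalEnvelopingAlgebra k g ⊗[k] UniversalEnvelopingAlgebra k g) :=
  Algebra.TensorProduct.assoc k k k _ _ _

/-- The alternation `Alt₂(X) = ½(X − τ(X))`. -/
def alt2 (X : UniversalEnvelopingAlgebra k g ⊗[k] UniversalEnvelopingAlgebra k g) :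
    UniversalEnvelopingAlgebra k g ⊗[k] UniversalEnvelopingAlgebra k g :=
  (2 : k)⁻¹ • (X - τU k g X)

variable {g} in
/-- `X` is an additive 2-cocycle: `1⊗X + (id⊗Δ)(X) = X⊗1 + (Δ⊗id)(X)`. -/
def IsAdd2Cocycle
    (Δ : UniversalEnvelopingAlgebra k g →ₐ[k]
      UniversalEnvelopingAlgebra k g ⊗[k] UniversalEnvelopingAlgebra k g)
    (X : UniversalEnvelopingAlgebra k g ⊗[k] UniversalEnvelopingAlgebra k g) : Prop :=
  (1 : UniversalEnvelopingAlgebra k g) ⊗ₜ[k] X +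
      Algebra.TensorProduct.map (AlgHom.id k (UniversalEnvelopingAlgebra k g)) Δ X =
    αU k g (X ⊗ₜ[k] (1 : UniversalEnvelopingAlgebra k g) +
      Algebra.TensorProduct.map Δ (AlgHom.id k (UniversalEnvelopingAlgebra k g)) X)

/-- `r₁₂ = r ⊗ 1` in `U(g)^{⊗3}`. -/
def u12 (r : UniversalEnvelopingAlgebra k g ⊗[k] UniversalEnvelopingAlgebra k g) :
    UniversalEnvelopingAlgebra k g ⊗[k]
      (UniversalEnvelopingAlgebra k g ⊗[k] UniversalEnvelopingAlgebra k g) :=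
  αU k g (r ⊗ₜ[k] (1 : UniversalEnvelopingAlgebra k g))

/-- `r₂₃ = 1 ⊗ r` in `U(g)^{⊗3}`. -/
def u23 (r : UniversalEnvelopingAlgebra k g ⊗[k] UniversalEnvelopingAlgebra k g) :
    UniversalEnvelopingAlgebra k g ⊗[k]
      (UniversalEnvelopingAlgebra k g ⊗[k] UniversalEnvelopingAlgebra k g) :=
  (1 : UniversalEnvelopingAlgebra k g) ⊗ₜ[k] r

/-- `r₁₃ = (id ⊗ τ)(r ⊗ 1)` in `U(g)^{⊗3}`. -/
def u13 (r : UniversalEnvelopingAlgebra k g ⊗[k] UniversalEnvelopingAlgebra k g) :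
    UniversalEnvelopingAlgebra k g ⊗[k]
      (UniversalEnvelopingAlgebra k g ⊗[k] UniversalEnvelopingAlgebra k g) :=
  Algebra.TensorProduct.map (AlgHom.id k (UniversalEnvelopingAlgebra k g)) (τU k g).toAlgHom
    (αU k g (r ⊗ₜ[k] (1 : UniversalEnvelopingAlgebra k g)))

local notation "Ug" => UniversalEnvelopingAlgebra k g

/-- Auxiliary map: `a ⊗ b ↦ Δ(ι a) ⊗ ι b`. -/
noncomputable def νmap (Δ : Ug →ₐ[k] Ug ⊗[k] Ug) :
    g ⊗[k] g →ₗ[k] (Ug ⊗[k] Ug) ⊗[k] Ug :=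
  TensorProduct.map (Δ.toLinearMap ∘ₗ ιU k g) (ιU k g)

/-- Auxiliary map: `a ⊗ b ↦ ι a ⊗ Δ(ι b)`. -/
noncomputable def ρmap (Δ : Ug →ₐ[k] Ug ⊗[k] Ug) :
    g ⊗[k] g →ₗ[k] Ug ⊗[k] (Ug ⊗[k] Ug) :=
  TensorProduct.map (ιU k g) (Δ.toLinearMap ∘ₗ ιU k g)

/-- The algebra map `(id ⊗ τ) ∘ α`. -/
noncomputable def Fmap : (Ug ⊗[k] Ug) ⊗[k] Ug →ₐ[k] Ug ⊗[k] (Ug ⊗[k] Ug) :=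
  (Algebra.TensorProduct.map (AlgHom.id k Ug) (τU k g).toAlgHom).comp (αU k g).toAlgHom

set_option maxHeartbeats 1000000 in
/-- For a `g`-invariant antisymmetric element `X` of the image of `g ⊗ g`
in `U(g) ⊗ U(g)`, one has `[X₁₃, X₂₃] = 0`. -/
theorem invariant_X13_X23_commute
    (Δ : Ug →ₐ[k] Ug ⊗[k] Ug)
    (hΔ : ∀ x : g, Δ (ιU k g x) = ιU k g x ⊗ₜ[k] 1 + 1 ⊗ₜ[k] ιU k g x)
    (X : Ug ⊗[k] Ug)
    (hXr : X ∈ LinearMap.range (ιι k g))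
    (hXa : τU k g X = -X)
    (hXinv : ∀ x : g, Δ (ιU k g x) * X = X * Δ (ιU k g x)) :
    u13 k g X * u23 k g X = u23 k g X * u13 k g X := by
  obtain ⟨t, ht⟩ := hXr
  -- core commutation lemmas coming from `hXinv`
  have hcomm : ∀ s : g ⊗[k] g,
      (X ⊗ₜ[k] (1 : Ug)) * νmap k g Δ s = νmap k g Δ s * (X ⊗ₜ[k] (1 : Ug)) := by
    intro s
    induction s using TensorProduct.induction_on with
    | zero => simp
    | tmul a b =>
        simp only [νmap, TensorProduct.map_tmul, LinearMap.comp_apply,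
          AlgHom.toLinearMap_apply, Algebra.TensorProduct.tmul_mul_tmul, one_mul, mul_one,
          hXinv a]
    | add x y hx hy => simp [map_add, add_mul, mul_add, hx, hy]
  have hcomm' : ∀ s : g ⊗[k] g,
      ρmap k g Δ s * ((1 : Ug) ⊗ₜ[k] X) = ((1 : Ug) ⊗ₜ[k] X) * ρmap k g Δ s := by
    intro s
    induction s using TensorProduct.induction_on with
    | zero => simp
    | tmul a b =>
        simp only [ρmap, TensorProduct.map_tmul, LinearMap.comp_apply,
          AlgHom.toLinearMap_apply, Algebra.TensorProduct.tmul_mul_tmul, one_mul, mul_one,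
          hXinv b]
    | add x y hx hy => simp [map_add, add_mul, mul_add, hx, hy]
  -- structural lemmas
  have hS1 : ∀ s : g ⊗[k] g,
      u12 k g (ιι k g s) + u13 k g (ιι k g s) = ρmap k g Δ s := by
    intro s
    induction s using TensorProduct.induction_on with
    | zero => simp [u12, u13, ιι, ρmap]
    | tmul a b =>
        simp only [u12, u13, ιι, ρmap, αU, τU, TensorProduct.map_tmul,
          Algebra.TensorProduct.assoc_tmul, Algebra.TensorProduct.map_tmul,
          Algebra.TensorProduct.comm_tmul, AlgHom.coe_id, id_eq, AlgEquiv.toAlgHom_eq_coe,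
          AlgHom.coe_coe, AlgEquiv.coe_toAlgHom, LinearMap.comp_apply, AlgHom.toLinearMap_apply, hΔ b,
          TensorProduct.tmul_add]
    | add x y hx hy =>
        simp only [u12, u13, ιι, map_add, TensorProduct.add_tmul] at hx hy ⊢
        rw [← hx, ← hy]; abel
  have hS2 : ∀ s : g ⊗[k] g,
      αU k g (νmap k g Δ s) = u13 k g (ιι k g s) + u23 k g (ιι k g s) := by
    intro s
    induction s using TensorProduct.induction_on with
    | zero => simp [u13, u23, ιι, νmap]
    | tmul a b =>
        simp only [u13, u23, ιι, νmap, αU, τU, TensorProduct.map_tmul,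
          LinearMap.comp_apply, AlgHom.toLinearMap_apply, hΔ a, TensorProduct.add_tmul,
          map_add, Algebra.TensorProduct.assoc_tmul, Algebra.TensorProduct.map_tmul,
          Algebra.TensorProduct.comm_tmul, AlgHom.coe_id, id_eq, AlgEquiv.toAlgHom_eq_coe,
          AlgHom.coe_coe, AlgEquiv.coe_toAlgHom]
    | add x y hx hy =>
        simp only [u13, u23, ιι, map_add, TensorProduct.add_tmul, TensorProduct.tmul_add]
          at hx hy ⊢
        rw [hx, hy]; abel
  have hS4 : ∀ s : g ⊗[k] g,
      Fmap k g (νmap k g Δ (TensorProduct.comm k g g s)) =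
        u23 k g (ιι k g s) + u12 k g (τU k g (ιι k g s)) := by
    intro s
    induction s using TensorProduct.induction_on with
    | zero => simp [u12, u23, ιι, νmap, Fmap]
    | tmul a b =>
        rw [TensorProduct.comm_tmul]
        simp only [νmap, TensorProduct.map_tmul, LinearMap.comp_apply,
          AlgHom.toLinearMap_apply, hΔ b]
        rw [TensorProduct.add_tmul, map_add]
        simp only [Fmap, AlgHom.comp_apply, AlgEquiv.toAlgHom_eq_coe, AlgHom.coe_coe, AlgEquiv.coe_toAlgHom, αU,
          Algebra.TensorProduct.assoc_tmul, Algebra.TensorProduct.map_tmul,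
          AlgHom.coe_id, id_eq, τU, Algebra.TensorProduct.comm_tmul,
          u12, u23, ιι, TensorProduct.map_tmul]
        abel
    | add x y hx hy =>
        simp only [u12, u23, ιι, map_add, TensorProduct.add_tmul, TensorProduct.tmul_add]
          at hx hy ⊢
        rw [hx, hy]; abel
  -- rewrite the three commutation relations in terms of P, Q, R
  set P := u12 k g X with hP
  set Q := u13 k g X with hQ
  set R := u23 k g X with hR
  have hu12 : P = αU k g (X ⊗ₜ[k] (1 : Ug)) := rfl
  have hu13 : Q = Fmap k g (X ⊗ₜ[k] (1 : Ug)) := by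
    rw [hQ]
    simp only [u13, Fmap, AlgHom.comp_apply, AlgEquiv.toAlgHom_eq_coe, AlgHom.coe_coe]
    rfl
  have hu23 : R = (1 : Ug) ⊗ₜ[k] X := rfl
  -- L1 : (P + Q) * R = R * (P + Q)
  have hL1 : (P + Q) * R = R * (P + Q) := by
    have e := hcomm' t
    rw [← hS1 t, ht] at e
    rw [hu23]; exact e
  -- L2 : P * (Q + R) = (Q + R) * P
  have hL2 : P * (Q + R) = (Q + R) * P := by
    have e := congrArg (αU k g) (hcomm t)
    rw [map_mul, map_mul, hS2 t, ht] at e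
    rw [hu12]; exact e
  -- L4 : Q * (R - P) = (R - P) * Q
  have hτ : u12 k g (τU k g X) = -P := by
    rw [hXa, hP, u12, u12, TensorProduct.neg_tmul, map_neg]
  have hL4 : Q * (R - P) = (R - P) * Q := by
    have e := congrArg (Fmap k g) (hcomm (TensorProduct.comm k g g t))
    rw [map_mul, map_mul, hS4 t, ht, hτ] at e
    rw [hu13]
    rw [sub_eq_add_neg]
    exact e
  -- now pure (noncommutative) ring manipulation
  have h1 : P * R + Q * R = R * P + R * Q := by
    rw [← add_mul, ← mul_add]; exact hL1
  have h2 : P * Q + P * R = Q * P + R * P := by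
    rw [← mul_add, ← add_mul]; exact hL2
  have h4e : Q * R - Q * P = R * Q - P * Q := by
    rw [← mul_sub, ← sub_mul]; exact hL4
  have a1 : Q * R - R * Q = R * P - P * R := by
    rw [sub_eq_sub_iff_add_eq_add, add_comm (Q * R) (P * R)]
    exact h1
  have a2 : P * Q - Q * P = R * P - P * R := by
    rw [sub_eq_sub_iff_add_eq_add, add_comm (R * P) (Q * P)]
    exact h2
  have hiii : Q * R - R * Q = P * Q - Q * P := a1.trans a2.symm
  have hiv : Q * R - R * Q = Q * P - P * Q := by
    rw [sub_eq_sub_iff_add_eq_add]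
    have := sub_eq_sub_iff_add_eq_add.mp h4e
    rw [this]; abel
  have hsum : (Q * R - R * Q) + (Q * R - R * Q) = 0 := by
    nth_rewrite 1 [hiii]
    rw [hiv]; abel
  have h2z : (2 : k) • (Q * R - R * Q) = 0 := by rw [two_smul]; exact hsum
  have hz : Q * R - R * Q = 0 := by
    rcases smul_eq_zero.mp h2z with h | h
    · exact absurd h (by norm_num)
    · exact h
  exact sub_eq_zero.mp hz

end
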